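/- Let G = (V,E) be a finite simple graph on V = {1,…,n} admitting a decomposition (A,C,B), and let f : ℝ → ℝ with f(0) = 0. Suppose that f[M] ∈ P_{G_{A∪C}}(ℝ) for every M ∈ P_{G_{A∪C}}(ℝ), that f[M] ∈ P_{G_{B∪C}}(ℝ) for every M ∈ P_{G_{B∪C}}(ℝ), and that f[X+Y] − f[X] − f[Y] is positive semidefinite for all |C|×|C| real symmetric positive semidefinite matrices X, Y (i.e., f[−] is Loewner super-additive on P_{G_C}(ℝ) = P_{|C|}(ℝ)). Then f[M] ∈ P_G(ℝ) for every M ∈ P_G(ℝ). -/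

import Mathlib

open Matrix

/-- Entrywise power with the convention `0 ^ α := 0` for all `α`. -/
noncomputable def powF (α x : ℝ) : ℝ := if x = 0 then 0 else x ^ α

/-- `ψ_α(x) := sgn(x) * |x| ^ α`, with `ψ_α(0) := 0`. -/
noncomputable def psiF (α x : ℝ) : ℝ := if x = 0 then 0 else Real.sign x * |x| ^ α

/-- `φ_α(x) := |x| ^ α`, with `φ_α(0) := 0`. -/
noncomputable def phiF (α x : ℝ) : ℝ := if x = 0 then 0 else |x| ^ α
/-- `P_G(I)`: symmetric positive semidefinite matrices with entries in `I`, vanishing at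
off-diagonal positions corresponding to non-edges of `G`. -/
def PG {V : Type*} [Fintype V] (G : SimpleGraph V) (I : Set ℝ) : Set (Matrix V V ℝ) :=
  {M | M.PosSemidef ∧ (∀ i j, M i j ∈ I) ∧ ∀ i j, i ≠ j → ¬ G.Adj i j → M i j = 0}

/-- `H_G`: powers `α` such that `A ↦ A^{∘α}` maps `P_G([0,∞))` into `P_G(ℝ)`. -/
noncomputable def HSet {V : Type*} [Fintype V] (G : SimpleGraph V) : Set ℝ :=
  {α | ∀ A ∈ PG G (Set.Ici 0), A.map (powF α) ∈ PG G Set.univ}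

/-- `H_G^ψ`: powers `α` such that `ψ_α[-]` maps `P_G(ℝ)` into `P_G(ℝ)`. -/
noncomputable def HSetPsi {V : Type*} [Fintype V] (G : SimpleGraph V) : Set ℝ :=
  {α | ∀ A ∈ PG G Set.univ, A.map (psiF α) ∈ PG G Set.univ}

/-- `H_G^φ`: powers `α` such that `φ_α[-]` maps `P_G(ℝ)` into `P_G(ℝ)`. -/
noncomputable def HSetPhi {V : Type*} [Fintype V] (G : SimpleGraph V) : Set ℝ :=
  {α | ∀ A ∈ PG G Set.univ, A.map (phiF α) ∈ PG G Set.univ}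

/-- A graph is chordal if every cycle of length at least 4 has a chord, i.e. an edge of `G`
joining two vertices of the cycle that is not an edge of the cycle. -/
def IsChordalG {V : Type*} (G : SimpleGraph V) : Prop :=
  ∀ ⦃v : V⦄ (w : G.Walk v v), w.IsCycle → 4 ≤ w.length →
    ∃ i j : V, i ∈ w.support ∧ j ∈ w.support ∧ G.Adj i j ∧ ¬ w.toSubgraph.Adj i j
/-- `K_r^{(1)}` (the complete graph on `r` vertices minus one edge) is a subgraph of `G`:
there are `r` distinct vertices, all pairs of which are adjacent except possibly one fixed
pair. -/
def HasKr1 {V : Type*} (G : SimpleGraph V) (r : ℕ) : Prop :=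
  ∃ f : Fin r → V, Function.Injective f ∧ ∃ a b : Fin r,
    ∀ i j : Fin r, i ≠ j → ¬(i = a ∧ j = b) → ¬(i = b ∧ j = a) → G.Adj (f i) (f j)

/-- `(A, C, B)` is a decomposition of `G`: the three sets partition the vertex set, `C`
induces a complete subgraph, and `C` separates `A` from `B` (every walk from a vertex of
`A` to a vertex of `B` meets `C`). -/
def IsDecompositionG {n : ℕ} (G : SimpleGraph (Fin n)) (A C B : Finset (Fin n)) : Prop :=
  (∀ v, v ∈ A ∨ v ∈ C ∨ v ∈ B) ∧ Disjoint A C ∧ Disjoint A B ∧ Disjoint C B ∧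
    G.IsClique (C : Set (Fin n)) ∧
    ∀ a ∈ A, ∀ b ∈ B, ∀ p : G.Walk a b, ∃ c ∈ C, c ∈ p.support

open scoped RealInnerProductSpace

/-- Gram matrices are positive semidefinite. -/
lemma gram_psd {n m : ℕ} (w : Fin n → EuclideanSpace ℝ (Fin m)) :
    (Matrix.of fun i j => ⟪w i, w j⟫).PosSemidef := by
  have h : (Matrix.of fun i j => ⟪w i, w j⟫)
      = (Matrix.of fun k j => w j k)ᴴ * (Matrix.of fun k j => w j k) := by
    ext i j
    simp [Matrix.mul_apply, PiLp.inner_apply, RCLike.inner_apply]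
    exact Finset.sum_congr rfl fun _ _ => mul_comm _ _
  rw [h]
  exact Matrix.posSemidef_conjTranspose_mul_self _

/-- Padding a positive semidefinite matrix with zeros is positive semidefinite. -/
lemma psd_pad {n : ℕ} (S : Finset (Fin n)) (N : Matrix (Fin n) (Fin n) ℝ)
    (hsym : ∀ i j, N i j = N j i)
    (hz : ∀ i j, i ∉ S ∨ j ∉ S → N i j = 0)
    (h : (N.submatrix (fun i : {x // x ∈ S} => (i : Fin n))
        (fun i : {x // x ∈ S} => (i : Fin n))).PosSemidef) : N.PosSemidef := by
  refine .of_dotProduct_mulVec_nonneg ?_ ?_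
  · ext i j
    simp only [Matrix.conjTranspose_apply, star_trivial]
    exact hsym j i
  · intro x
    have key : ∀ g : Fin n → ℝ, (∀ i, i ∉ S → g i = 0) →
        ∑ i, g i = ∑ i : {x // x ∈ S}, g (i : Fin n) := by
      intro g hg
      rw [Finset.sum_coe_sort S g]
      exact (Finset.sum_subset (Finset.subset_univ S) (fun i _ hi => hg i hi)).symm
    have hq : dotProduct (star x) (N *ᵥ x)
        = dotProduct (star fun i : {x // x ∈ S} => x (i : Fin n))
            ((N.submatrix (fun i : {x // x ∈ S} => (i : Fin n))
              (fun i : {x // x ∈ S} => (i : Fin n))) *ᵥ fun i => x (i : Fin n)) := by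
      simp only [dotProduct, Matrix.mulVec, star_trivial, Matrix.submatrix_apply]
      rw [key (fun i => x i * ∑ j, N i j * x j) ?_]
      · refine Finset.sum_congr rfl fun i _ => ?_
        congr 1
        exact key _ (fun j hj => by simp [hz _ _ (Or.inr hj)])
      · intro i hi
        have : ∀ j, N i j * x j = 0 := fun j => by rw [hz _ _ (Or.inl hi), zero_mul]
        simp [this]
    rw [hq]
    exact h.dotProduct_mulVec_nonneg _

/-- If `f[-]` preserves positivity on `P_{G_{A∪C}}(ℝ)` and `P_{G_{B∪C}}(ℝ)` and is Loewner
super-additive on `P_{|C|}(ℝ)`, then `f[-]` preserves positivity on `P_G(ℝ)`. -/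
theorem stmt9 (n : ℕ) (G : SimpleGraph (Fin n)) (A C B : Finset (Fin n))
    (hdec : IsDecompositionG G A C B) (f : ℝ → ℝ) (hf0 : f 0 = 0)
    (hAC : ∀ M ∈ PG (G.induce ((A ∪ C : Finset (Fin n)) : Set (Fin n))) Set.univ,
      M.map f ∈ PG (G.induce ((A ∪ C : Finset (Fin n)) : Set (Fin n))) Set.univ)
    (hBC : ∀ M ∈ PG (G.induce ((B ∪ C : Finset (Fin n)) : Set (Fin n))) Set.univ,
      M.map f ∈ PG (G.induce ((B ∪ C : Finset (Fin n)) : Set (Fin n))) Set.univ)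
    (hsuper : ∀ X Y : Matrix (Fin C.card) (Fin C.card) ℝ, X.PosSemidef → Y.PosSemidef →
      ((X + Y).map f - X.map f - Y.map f).PosSemidef) :
    ∀ M ∈ PG G Set.univ, M.map f ∈ PG G Set.univ := by
  classical
  obtain ⟨hdall, hdAC, hdAB, hdCB, hclq, hsep⟩ := hdec
  intro M hM
  obtain ⟨hMpsd, -, hMsp⟩ := hM
  have hMsym : ∀ i j, M i j = M j i := by
    intro i j
    have h := congrFun (congrFun hMpsd.1 j) i
    simpa [Matrix.conjTranspose_apply] using h
  -- entries between A and B vanish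
  have hMAB : ∀ a ∈ A, ∀ b ∈ B, M a b = 0 := by
    intro a ha b hb
    have hne : a ≠ b := fun h => Finset.disjoint_left.mp hdAB ha (h ▸ hb)
    refine hMsp a b hne ?_
    intro hadj
    obtain ⟨c, hcC, hcs⟩ := hsep a ha b hb hadj.toWalk
    simp [SimpleGraph.Walk.support_cons, SimpleGraph.Walk.support_nil] at hcs
    rcases hcs with rfl | rfl
    · exact Finset.disjoint_left.mp hdAC ha hcC
    · exact Finset.disjoint_left.mp hdCB hcC hb
  -- Gram vectors for M
  obtain ⟨Bm, hBm⟩ := (by open scoped MatrixOrder in exact CStarAlgebra.nonneg_iff_eq_star_mul_self.mp hMpsd.nonneg :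
    ∃ B : Matrix (Fin n) (Fin n) ℝ, M = Bᴴ * B)
  set v : Fin n → EuclideanSpace ℝ (Fin n) := fun j => WithLp.toLp 2 (fun k => Bm k j) with hv
  have hMv : ∀ i j, M i j = ⟪v i, v j⟫ := by
    intro i j
    rw [hBm]
    simp [Matrix.mul_apply, PiLp.inner_apply, RCLike.inner_apply, hv]
    exact Finset.sum_congr rfl fun _ _ => mul_comm _ _
  set U : Submodule ℝ (EuclideanSpace ℝ (Fin n)) := Submodule.span ℝ (v '' ↑A) with hU
  set Q : EuclideanSpace ℝ (Fin n) → EuclideanSpace ℝ (Fin n) :=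
    fun x => (U.orthogonalProjectionOnto x : EuclideanSpace ℝ (Fin n)) with hQ
  have hQmem : ∀ x, Q x ∈ U := fun x => (U.orthogonalProjectionOnto x).2
  have hQsub : ∀ x, x - Q x ∈ Uᗮ := fun x => U.sub_starProjection_mem_orthogonal x
  have hvA : ∀ a ∈ A, v a ∈ U := by
    intro a ha
    exact Submodule.subset_span ⟨a, ha, rfl⟩
  have hQA : ∀ a ∈ A, Q (v a) = v a := fun a ha =>
    U.starProjection_eq_self_iff.mpr (hvA a ha)
  have hvB : ∀ b ∈ B, v b ∈ Uᗮ := by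
    intro b hb
    rw [Submodule.mem_orthogonal]
    intro u hu
    induction hu using Submodule.span_induction with
    | mem y hy =>
      obtain ⟨a, ha, rfl⟩ := hy
      rw [← hMv a b]
      exact hMAB a ha b hb
    | zero => simp
    | add y z _ _ hy hz => rw [inner_add_left, hy, hz, add_zero]
    | smul t y _ hy => rw [inner_smul_left, hy, mul_zero]
  have hQB : ∀ b ∈ B, Q (v b) = 0 := by
    intro b hb
    have h := Submodule.orthogonalProjectionOnto_apply_of_mem_orthogonal (hvB b hb)
    rw [hQ]
    simp [h]
  -- the two Gram summands
  set M1 : Matrix (Fin n) (Fin n) ℝ := Matrix.of fun i j => ⟪Q (v i), Q (v j)⟫ with hM1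
  set M2 : Matrix (Fin n) (Fin n) ℝ :=
    Matrix.of fun i j => ⟪v i - Q (v i), v j - Q (v j)⟫ with hM2
  have hM1e : ∀ i j, M1 i j = ⟪Q (v i), Q (v j)⟫ := fun i j => rfl
  have hM2e : ∀ i j, M2 i j = ⟪v i - Q (v i), v j - Q (v j)⟫ := fun i j => rfl
  have hM1psd : M1.PosSemidef := gram_psd _
  have hM2psd : M2.PosSemidef := gram_psd _
  have hM1sym : ∀ i j, M1 i j = M1 j i := fun i j => real_inner_comm (Q (v j)) (Q (v i))
  have hM2sym : ∀ i j, M2 i j = M2 j i := fun i j => real_inner_comm (v j - Q (v j)) (v i - Q (v i))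
  have hsplit : ∀ i j, M1 i j + M2 i j = M i j := by
    intro i j
    have h1 : ⟪Q (v i), v j - Q (v j)⟫ = (0:ℝ) :=
      Submodule.inner_right_of_mem_orthogonal (hQmem _) (hQsub _)
    have h2 : ⟪v i - Q (v i), Q (v j)⟫ = (0:ℝ) :=
      Submodule.inner_left_of_mem_orthogonal (hQmem _) (hQsub _)
    have hd : M i j = ⟪Q (v i) + (v i - Q (v i)), Q (v j) + (v j - Q (v j))⟫ := by
      rw [hMv]
      congr 1 <;> abel
    rw [hd, inner_add_left, inner_add_right, inner_add_right, h1, h2, hM1e, hM2e]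
    ring
  have hM1A : ∀ a ∈ A, ∀ j, M1 a j = M a j := by
    intro a ha j
    have h0 : ⟪v a, v j - Q (v j)⟫ = (0:ℝ) :=
      Submodule.inner_right_of_mem_orthogonal (hvA a ha) (hQsub _)
    have h1 := inner_sub_right (𝕜 := ℝ) (v a) (v j) (Q (v j))
    rw [h0] at h1
    rw [hM1e, hQA a ha, hMv]
    linarith
  have hM1B : ∀ b ∈ B, ∀ j, M1 b j = 0 := by
    intro b hb j
    rw [hM1e, hQB b hb]
    simp
  have hM2A : ∀ a ∈ A, ∀ j, M2 a j = 0 := by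
    intro a ha j
    have h := hsplit a j
    rw [hM1A a ha j] at h
    linarith
  have hM2B : ∀ b ∈ B, ∀ j, M2 b j = M b j := by
    intro b hb j
    have h := hsplit b j
    rw [hM1B b hb j] at h
    linarith
  have hAorC : ∀ i, i ∉ A ∪ C → i ∈ B := by
    intro i hi
    rcases hdall i with h | h | h
    · exact absurd (Finset.mem_union_left _ h) hi
    · exact absurd (Finset.mem_union_right _ h) hi
    · exact h
  have hBorC : ∀ i, i ∉ B ∪ C → i ∈ A := by
    intro i hi
    rcases hdall i with h | h | h
    · exact h
    · exact absurd (Finset.mem_union_right _ h) hi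
    · exact absurd (Finset.mem_union_left _ h) hi
  -- the A∪C block
  have hM1sub : M1.submatrix
      (fun i : ((A ∪ C : Finset (Fin n)) : Set (Fin n)) => (i : Fin n))
      (fun i : ((A ∪ C : Finset (Fin n)) : Set (Fin n)) => (i : Fin n))
      ∈ PG (G.induce ((A ∪ C : Finset (Fin n)) : Set (Fin n))) Set.univ := by
    refine ⟨hM1psd.submatrix _, fun _ _ => trivial, ?_⟩
    rintro ⟨i, hi⟩ ⟨j, hj⟩ hne hadj
    simp only [Matrix.submatrix_apply]
    have hne' : i ≠ j := fun h => hne (Subtype.ext h)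
    have hadj' : ¬ G.Adj i j := fun h => hadj (by simpa using h)
    have hi' : i ∈ A ∪ C := by simpa using hi
    have hj' : j ∈ A ∪ C := by simpa using hj
    rcases Finset.mem_union.mp hi' with hiA | hiC
    · rw [hM1A i hiA j]
      exact hMsp i j hne' hadj'
    · rcases Finset.mem_union.mp hj' with hjA | hjC
      · rw [hM1sym i j, hM1A j hjA i]
        exact hMsp j i hne'.symm (fun h => hadj' h.symm)
      · exact absurd (hclq (Finset.mem_coe.mpr hiC) (Finset.mem_coe.mpr hjC) hne') hadj'
  have hN1psd : (M1.map f).PosSemidef := by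
    apply psd_pad (A ∪ C)
    · intro i j
      simp only [Matrix.map_apply]
      rw [hM1sym i j]
    · intro i j hij
      rcases hij with hi | hj
      · rw [Matrix.map_apply, hM1B i (hAorC i hi) j, hf0]
      · rw [Matrix.map_apply, hM1sym i j, hM1B j (hAorC j hj) i, hf0]
    · have he : (M1.map f).submatrix
          (fun i : {x // x ∈ A ∪ C} => (i : Fin n)) (fun i : {x // x ∈ A ∪ C} => (i : Fin n))
          = (M1.submatrix
              (fun i : ((A ∪ C : Finset (Fin n)) : Set (Fin n)) => (i : Fin n))
              (fun i : ((A ∪ C : Finset (Fin n)) : Set (Fin n)) => (i : Fin n))).map f := by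
        ext i j
        simp
      rw [he]
      exact (hAC _ hM1sub).1
  -- the B∪C block
  have hM2sub : M2.submatrix
      (fun i : ((B ∪ C : Finset (Fin n)) : Set (Fin n)) => (i : Fin n))
      (fun i : ((B ∪ C : Finset (Fin n)) : Set (Fin n)) => (i : Fin n))
      ∈ PG (G.induce ((B ∪ C : Finset (Fin n)) : Set (Fin n))) Set.univ := by
    refine ⟨hM2psd.submatrix _, fun _ _ => trivial, ?_⟩
    rintro ⟨i, hi⟩ ⟨j, hj⟩ hne hadj
    simp only [Matrix.submatrix_apply]
    have hne' : i ≠ j := fun h => hne (Subtype.ext h)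
    have hadj' : ¬ G.Adj i j := fun h => hadj (by simpa using h)
    have hi' : i ∈ B ∪ C := by simpa using hi
    have hj' : j ∈ B ∪ C := by simpa using hj
    rcases Finset.mem_union.mp hi' with hiB | hiC
    · rw [hM2B i hiB j]
      exact hMsp i j hne' hadj'
    · rcases Finset.mem_union.mp hj' with hjB | hjC
      · rw [hM2sym i j, hM2B j hjB i]
        exact hMsp j i hne'.symm (fun h => hadj' h.symm)
      · exact absurd (hclq (Finset.mem_coe.mpr hiC) (Finset.mem_coe.mpr hjC) hne') hadj'
  have hN2psd : (M2.map f).PosSemidef := by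
    apply psd_pad (B ∪ C)
    · intro i j
      simp only [Matrix.map_apply]
      rw [hM2sym i j]
    · intro i j hij
      rcases hij with hi | hj
      · rw [Matrix.map_apply, hM2A i (hBorC i hi) j, hf0]
      · rw [Matrix.map_apply, hM2sym i j, hM2A j (hBorC j hj) i, hf0]
    · have he : (M2.map f).submatrix
          (fun i : {x // x ∈ B ∪ C} => (i : Fin n)) (fun i : {x // x ∈ B ∪ C} => (i : Fin n))
          = (M2.submatrix
              (fun i : ((B ∪ C : Finset (Fin n)) : Set (Fin n)) => (i : Fin n))
              (fun i : ((B ∪ C : Finset (Fin n)) : Set (Fin n)) => (i : Fin n))).map f := by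
        ext i j
        simp
      rw [he]
      exact (hBC _ hM2sub).1
  -- the superadditivity correction term on C
  set Dm : Matrix (Fin n) (Fin n) ℝ := Matrix.of fun i j =>
    if i ∈ C ∧ j ∈ C then f (M i j) - f (M1 i j) - f (M2 i j) else 0 with hDm
  have hDe : ∀ i j, Dm i j =
      if i ∈ C ∧ j ∈ C then f (M i j) - f (M1 i j) - f (M2 i j) else 0 := fun i j => rfl
  have hDpsd : Dm.PosSemidef := by
    apply psd_pad C
    · intro i j
      rw [hDe, hDe]
      by_cases h : i ∈ C ∧ j ∈ C
      · rw [if_pos h, if_pos ⟨h.2, h.1⟩, hMsym i j, hM1sym i j, hM2sym i j]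
      · rw [if_neg h, if_neg (fun h' => h ⟨h'.2, h'.1⟩)]
    · intro i j hij
      rw [hDe, if_neg]
      rintro ⟨h1, h2⟩
      rcases hij with h | h
      · exact h h1
      · exact h h2
    · set e : Fin C.card ≃ {x // x ∈ C} := C.equivFin.symm with he
      set X : Matrix (Fin C.card) (Fin C.card) ℝ :=
        M1.submatrix (fun p => ((e p) : Fin n)) (fun p => ((e p) : Fin n)) with hXd
      set Y : Matrix (Fin C.card) (Fin C.card) ℝ :=
        M2.submatrix (fun p => ((e p) : Fin n)) (fun p => ((e p) : Fin n)) with hYd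
      have hD0 := hsuper X Y (hM1psd.submatrix _) (hM2psd.submatrix _)
      have hD1 := hD0.submatrix e.symm
      have hEq : Dm.submatrix (fun i : {x // x ∈ C} => (i : Fin n))
          (fun i : {x // x ∈ C} => (i : Fin n))
          = (((X + Y).map f - X.map f - Y.map f)).submatrix e.symm e.symm := by
        ext i j
        simp only [Matrix.submatrix_apply, Matrix.sub_apply, Matrix.map_apply, Matrix.add_apply,
          hXd, hYd, Equiv.apply_symm_apply]
        rw [hDe, if_pos ⟨i.2, j.2⟩, hsplit]
      rw [hEq]
      exact hD1
  -- assemble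
  have hfinal : M.map f = M1.map f + M2.map f + Dm := by
    ext i j
    simp only [Matrix.map_apply, Matrix.add_apply]
    rw [hDe]
    by_cases h : i ∈ C ∧ j ∈ C
    · rw [if_pos h]
      ring
    · rw [if_neg h, add_zero]
      rcases hdall i with hiA | hiC | hiB
      · rw [hM1A i hiA j, hM2A i hiA j, hf0, add_zero]
      · rcases hdall j with hjA | hjC | hjB
        · rw [hM1sym i j, hM2sym i j, hM1A j hjA i, hM2A j hjA i, hf0, add_zero,
            hMsym i j]
        · exact absurd ⟨hiC, hjC⟩ h
        · rw [hM1sym i j, hM2sym i j, hM1B j hjB i, hM2B j hjB i, hf0, zero_add,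
            hMsym i j]
      · rw [hM1B i hiB j, hM2B i hiB j, hf0, zero_add]
  refine ⟨?_, fun _ _ => trivial, ?_⟩
  · rw [hfinal]
    exact (hN1psd.add hN2psd).add hDpsd
  · intro i j hne hadj
    rw [Matrix.map_apply, hMsp i j hne hadj, hf0]
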